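/- Let p = 2, F a field of characteristic 2, G a group with central element c of order 2, and g, h ∈ G. Let w = 1 + gĉ with ĉ = 1 + c. Then for k = 2^m, the iterated commutator (w, h, k) in the unit group of FG equals 1 + ĉ(g^{h^k} − g). Consequently, if (w, h, k) = 1, then (g, h^k) ∈ ⟨c⟩. -/

import Mathlib

open MonoidAlgebra

/-- The augmentation map of a group algebra. -/
noncomputable def aug (F G : Type*) [CommSemiring F] [Group G] :
    MonoidAlgebra F G →ₐ[F] F := MonoidAlgebra.lift F F G 1

/-- The classical involution `∑ a_g g ↦ ∑ a_g g⁻¹` of a group algebra. -/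
noncomputable def classicalStar {F G : Type*} [CommSemiring F] [Group G]
    (x : MonoidAlgebra F G) : MonoidAlgebra F G := MonoidAlgebra.mapDomain (·⁻¹) x

/-- A unit of the group algebra is unitary if it is normalized (augmentation one)
and its classical star is its inverse. -/
def IsUnitaryUnit {F G : Type*} [CommSemiring F] [Group G]
    (u : (MonoidAlgebra F G)ˣ) : Prop :=
  aug F G (u : MonoidAlgebra F G) = 1 ∧
    classicalStar (u : MonoidAlgebra F G) = ((u⁻¹ : (MonoidAlgebra F G)ˣ) : MonoidAlgebra F G)

/-- A group is locally nilpotent if every finitely generated subgroup is nilpotent. -/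
def IsLocallyNilpotent (G : Type*) [Group G] : Prop :=
  ∀ H : Subgroup G, H.FG → Group.IsNilpotent H

/-- `V_*(FG)` is locally nilpotent: every finitely generated subgroup of the unit
group consisting of unitary units is nilpotent. -/
def VstarLocallyNilpotent (F G : Type*) [CommSemiring F] [Group G] : Prop :=
  ∀ S : Subgroup (MonoidAlgebra F G)ˣ, (∀ u ∈ S, IsUnitaryUnit u) → S.FG →
    Group.IsNilpotent S

/-- `V(FG)` is locally nilpotent: every finitely generated subgroup of the unit
group consisting of normalized units is nilpotent. -/
def VLocallyNilpotent (F G : Type*) [CommSemiring F] [Group G] : Prop :=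
  ∀ S : Subgroup (MonoidAlgebra F G)ˣ,
    (∀ u ∈ S, aug F G (u : MonoidAlgebra F G) = 1) → S.FG → Group.IsNilpotent S

/-- `ĉ = 1 + c + ⋯ + c^(p-1)` in the group algebra. -/
noncomputable def chat (F : Type*) {G : Type*} [CommSemiring F] [Group G]
    (c : G) (p : ℕ) : MonoidAlgebra F G :=
  ∑ i ∈ Finset.range p, MonoidAlgebra.of F G c ^ i

/-- The commutator `(x,y) = x⁻¹y⁻¹xy`. -/
def gcomm {M : Type*} [Group M] (x y : M) : M := x⁻¹ * y⁻¹ * x * y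

/-- Left-normed iterated commutator `(x, y, n)`. -/
def itComm {M : Type*} [Group M] (x y : M) : ℕ → M
  | 0 => x
  | n + 1 => gcomm (itComm x y n) y

set_option linter.unusedSectionVars false

section Aux
variable {F G : Type*} [Field F] [Group G] [CharP F 2]

lemma my_two_eq_zero : (1:F) + 1 = 0 := by
  have := CharP.cast_eq_zero F 2
  norm_num at this
  linear_combination this

lemma my_addself (x : MonoidAlgebra F G) : x + x = 0 := by
  calc x + x = ((1:F)+1) • x := by rw [add_smul, one_smul]
    _ = 0 := by rw [my_two_eq_zero, zero_smul]

lemma my_negself (x : MonoidAlgebra F G) : -x = x :=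
  neg_eq_of_add_eq_zero_left (my_addself x)

lemma my_ofc_comm (c : G) (hc : c ∈ Subgroup.center G) (x : MonoidAlgebra F G) :
    MonoidAlgebra.of F G c * x = x * MonoidAlgebra.of F G c := by
  induction x using MonoidAlgebra.induction_linear with
  | zero => simp
  | add f g hf hg => rw [mul_add, add_mul, hf, hg]
  | single a b =>
    rw [MonoidAlgebra.of_apply, MonoidAlgebra.single_mul_single,
      MonoidAlgebra.single_mul_single, one_mul, mul_one,
      ← Subgroup.mem_center_iff.mp hc a]

lemma my_chat2 (c : G) : chat F c 2 = 1 + MonoidAlgebra.of F G c := by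
  simp [chat, Finset.sum_range_succ]
  rfl

lemma my_chat_comm (c : G) (hc : c ∈ Subgroup.center G) (x : MonoidAlgebra F G) :
    chat F c 2 * x = x * chat F c 2 := by
  rw [my_chat2, add_mul, mul_add, one_mul, mul_one, my_ofc_comm c hc]

lemma my_chat_sq (c : G) (hord : orderOf c = 2) :
    chat F c 2 * chat F c 2 = (0 : MonoidAlgebra F G) := by
  have hc2 : c * c = 1 := by
    have := pow_orderOf_eq_one c
    rwa [hord, pow_two] at this
  rw [my_chat2, add_mul, mul_add, mul_add, one_mul, mul_one, ← map_mul, hc2, map_one]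
  rw [show (1:MonoidAlgebra F G) + 1 * MonoidAlgebra.of F G c +
    (MonoidAlgebra.of F G c + 1) = (1+1) + (MonoidAlgebra.of F G c + MonoidAlgebra.of F G c) by
      rw [one_mul]; abel,
    my_addself, my_addself, add_zero]

lemma my_dd (c : G) (hc : c ∈ Subgroup.center G) (hord : orderOf c = 2) (a b : MonoidAlgebra F G) : chat F c 2 * a * (chat F c 2 * b) = 0 := by
  have h1 : a * (chat F c 2 * b) = chat F c 2 * (a * b) := by
    rw [← mul_assoc, ← my_chat_comm c hc a, mul_assoc]
  rw [mul_assoc, h1, ← mul_assoc, my_chat_sq c hord, zero_mul]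

lemma my_mul_form (c : G) (hc : c ∈ Subgroup.center G) (hord : orderOf c = 2) (a b : MonoidAlgebra F G) :
    (1 + chat F c 2 * a) * (1 + chat F c 2 * b) = 1 + chat F c 2 * (a + b) := by
  have h0 := my_dd c hc hord a b
  calc (1 + chat F c 2 * a) * (1 + chat F c 2 * b)
      = 1 + chat F c 2 * b + chat F c 2 * a + chat F c 2 * a * (chat F c 2 * b) := by noncomm_ring
    _ = 1 + chat F c 2 * (a + b) := by rw [h0, add_zero, mul_add]; abel

lemma my_unit_inv (c : G) (hc : c ∈ Subgroup.center G) (hord : orderOf c = 2) (u : (MonoidAlgebra F G)ˣ) (a : MonoidAlgebra F G)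
    (hu : (u : MonoidAlgebra F G) = 1 + chat F c 2 * a) :
    ((u⁻¹ : (MonoidAlgebra F G)ˣ) : MonoidAlgebra F G) = 1 + chat F c 2 * a := by
  have hsq : u * u = 1 := by
    apply Units.ext
    rw [Units.val_mul, hu, my_mul_form c hc hord a a, my_addself, mul_zero, add_zero, Units.val_one]
  rw [← inv_eq_of_mul_eq_one_right hsq] at hu
  rw [← hu]

lemma my_huinv (h : G) (hu : (MonoidAlgebra F G)ˣ)
    (hh : (hu : MonoidAlgebra F G) = MonoidAlgebra.of F G h) :
    ((hu⁻¹ : (MonoidAlgebra F G)ˣ) : MonoidAlgebra F G) = MonoidAlgebra.of F G h⁻¹ := by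
  apply Units.inv_eq_of_mul_eq_one_right
  rw [hh, ← map_mul, mul_inv_cancel, map_one]

lemma my_conj_form (c : G) (hc : c ∈ Subgroup.center G) (h : G) (a : MonoidAlgebra F G) :
    MonoidAlgebra.of F G h⁻¹ * (1 + chat F c 2 * a) * MonoidAlgebra.of F G h =
      1 + chat F c 2 * (MonoidAlgebra.of F G h⁻¹ * a * MonoidAlgebra.of F G h) := by
  rw [mul_add, add_mul, mul_one, ← map_mul, inv_mul_cancel, map_one]
  congr 1
  rw [← mul_assoc, ← mul_assoc, ← my_chat_comm c hc, mul_assoc, mul_assoc, mul_assoc,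
    mul_assoc]

lemma my_step (c : G) (hc : c ∈ Subgroup.center G) (hord : orderOf c = 2) (h : G) (hu : (MonoidAlgebra F G)ˣ)
    (hh : (hu : MonoidAlgebra F G) = MonoidAlgebra.of F G h)
    (u : (MonoidAlgebra F G)ˣ) (a : MonoidAlgebra F G)
    (hua : (u : MonoidAlgebra F G) = 1 + chat F c 2 * a) :
    ((gcomm u hu : (MonoidAlgebra F G)ˣ) : MonoidAlgebra F G)
      = 1 + chat F c 2 * (a + MonoidAlgebra.of F G h⁻¹ * a * MonoidAlgebra.of F G h) := by
  have h1 : ((gcomm u hu : (MonoidAlgebra F G)ˣ) : MonoidAlgebra F G)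
      = (1 + chat F c 2 * a) *
        (MonoidAlgebra.of F G h⁻¹ * (1 + chat F c 2 * a) * MonoidAlgebra.of F G h) := by
    show ((u⁻¹ * hu⁻¹ * u * hu : (MonoidAlgebra F G)ˣ) : MonoidAlgebra F G) = _
    rw [Units.val_mul, Units.val_mul, Units.val_mul, my_unit_inv c hc hord u a hua,
      my_huinv h hu hh, hua, hh]
    rw [mul_assoc, mul_assoc, ← mul_assoc (MonoidAlgebra.of F G h⁻¹)]
  rw [h1, my_conj_form c hc h a, my_mul_form c hc hord]

end Aux

noncomputable def cjm (F : Type*) {G : Type*} [Field F] [Group G] (h : G) :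
    MonoidAlgebra F G → MonoidAlgebra F G :=
  fun x => MonoidAlgebra.of F G h⁻¹ * x * MonoidAlgebra.of F G h

noncomputable def phim (F : Type*) {G : Type*} [Field F] [Group G] (h : G) :
    MonoidAlgebra F G → MonoidAlgebra F G :=
  fun x => x + cjm F h x

section Iter
variable {F G : Type*} [Field F] [Group G] [CharP F 2]

lemma my_cj_add (h : G) (x y : MonoidAlgebra F G) :
    cjm F h (x + y) = cjm F h x + cjm F h y := by
  simp only [cjm, mul_add, add_mul]

lemma my_cj_iter_add (h : G) (n : ℕ) (x y : MonoidAlgebra F G) :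
    (cjm F h)^[n] (x + y) = (cjm F h)^[n] x + (cjm F h)^[n] y := by
  induction n generalizing x y with
  | zero => simp
  | succ n ih => rw [Function.iterate_succ_apply, Function.iterate_succ_apply,
      Function.iterate_succ_apply, my_cj_add, ih]

lemma my_phi_iter (h : G) (m : ℕ) (x : MonoidAlgebra F G) :
    (phim F h)^[2 ^ m] x = x + (cjm F h)^[2 ^ m] x := by
  induction m generalizing x with
  | zero => simp [phim]
  | succ m ih =>
    have h2 : 2 ^ (m + 1) = 2 ^ m + 2 ^ m := by ring
    rw [h2, Function.iterate_add_apply, ih, ih, my_cj_iter_add,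
      Function.iterate_add_apply]
    calc x + (cjm F h)^[2 ^ m] x +
          ((cjm F h)^[2 ^ m] x + (cjm F h)^[2 ^ m] ((cjm F h)^[2 ^ m] x))
        = x + (cjm F h)^[2 ^ m] ((cjm F h)^[2 ^ m] x) +
          ((cjm F h)^[2 ^ m] x + (cjm F h)^[2 ^ m] x) := by abel
      _ = x + (cjm F h)^[2 ^ m] ((cjm F h)^[2 ^ m] x) := by rw [my_addself, add_zero]

lemma my_cj_iter_of (g h : G) (n : ℕ) :
    (cjm F h)^[n] (MonoidAlgebra.of F G g) =
      MonoidAlgebra.of F G ((h ^ n)⁻¹ * g * h ^ n) := by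
  induction n with
  | zero => simp
  | succ n ih =>
    rw [Function.iterate_succ_apply', ih]
    show MonoidAlgebra.of F G h⁻¹ * _ * MonoidAlgebra.of F G h = _
    rw [← map_mul, ← map_mul]
    congr 1
    group

lemma my_itComm_form (c : G) (hc : c ∈ Subgroup.center G) (hord : orderOf c = 2)
    (g h : G) (w hu : (MonoidAlgebra F G)ˣ)
    (hw : (w : MonoidAlgebra F G) = 1 + MonoidAlgebra.of F G g * chat F c 2)
    (hh : (hu : MonoidAlgebra F G) = MonoidAlgebra.of F G h) (n : ℕ) :
    ((itComm w hu n : (MonoidAlgebra F G)ˣ) : MonoidAlgebra F G)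
      = 1 + chat F c 2 * ((phim F h)^[n] (MonoidAlgebra.of F G g)) := by
  induction n with
  | zero =>
    show (w : MonoidAlgebra F G) = _
    rw [hw, my_chat_comm c hc, Function.iterate_zero_apply]
  | succ n ih =>
    show ((gcomm (itComm w hu n) hu : (MonoidAlgebra F G)ˣ) : MonoidAlgebra F G) = _
    rw [my_step c hc hord h hu hh _ _ ih, Function.iterate_succ_apply']
    rfl

end Iter


theorem stmt15 (F G : Type*) [Field F] [Group G] [CharP F 2]
    (c : G) (hc : c ∈ Subgroup.center G) (hord : orderOf c = 2)
    (g h : G) (m : ℕ) (w hu : (MonoidAlgebra F G)ˣ)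
    (hw : (w : MonoidAlgebra F G) = 1 + MonoidAlgebra.of F G g * chat F c 2)
    (hh : (hu : MonoidAlgebra F G) = MonoidAlgebra.of F G h) :
    ((itComm w hu (2 ^ m) : (MonoidAlgebra F G)ˣ) : MonoidAlgebra F G) =
      1 + chat F c 2 *
        (MonoidAlgebra.of F G ((h ^ 2 ^ m)⁻¹ * g * h ^ 2 ^ m) - MonoidAlgebra.of F G g) ∧
      (itComm w hu (2 ^ m) = 1 → gcomm g (h ^ 2 ^ m) ∈ Subgroup.zpowers c) := by
  have hpart1 : ((itComm w hu (2 ^ m) : (MonoidAlgebra F G)ˣ) : MonoidAlgebra F G) =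
      1 + chat F c 2 * (MonoidAlgebra.of F G ((h ^ 2 ^ m)⁻¹ * g * h ^ 2 ^ m)
        - MonoidAlgebra.of F G g) := by
    rw [my_itComm_form c hc hord g h w hu hw hh, my_phi_iter, my_cj_iter_of,
      sub_eq_add_neg, my_negself,
      add_comm (MonoidAlgebra.of F G ((h ^ 2 ^ m)⁻¹ * g * h ^ 2 ^ m))]
  refine ⟨hpart1, fun hone => ?_⟩
  set g' := (h ^ 2 ^ m)⁻¹ * g * h ^ 2 ^ m with hg'
  have hc1 : c ≠ 1 := by
    intro h1
    rw [h1, orderOf_one] at hord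
    exact absurd hord (by norm_num)
  have heq : chat F c 2 * (MonoidAlgebra.of F G g' - MonoidAlgebra.of F G g) = 0 := by
    have h0 : (1 : MonoidAlgebra F G) = 1 + chat F c 2 *
        (MonoidAlgebra.of F G g' - MonoidAlgebra.of F G g) := by
      rw [← hpart1, hone, Units.val_one]
    exact (left_eq_add.mp h0)
  rw [sub_eq_add_neg, my_negself, my_chat2, add_mul, one_mul, mul_add,
    ← map_mul, ← map_mul] at heq
  have hcoef := congrArg (fun f : MonoidAlgebra F G => f.coeff g') heq
  have heq' : (Finsupp.single g' 1 + Finsupp.single g 1 +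
      (Finsupp.single (c * g') 1 + Finsupp.single (c * g) 1) : G →₀ F) = 0 := congrArg MonoidAlgebra.coeff heq
  classical
  have hcoef := congrArg (fun f : G →₀ F => f g') heq'
  simp only [Finsupp.add_apply, Finsupp.single_apply, Finsupp.coe_zero, Pi.zero_apply] at hcoef
  have hne : c * g' ≠ g' := fun hcg => hc1 (by
    have := mul_eq_right.mp hcg
    exact this)
  rw [if_true, if_neg hne] at hcoef
  have hgc : gcomm g (h ^ 2 ^ m) = g⁻¹ * g' := by
    simp [gcomm, hg', mul_assoc]
  by_cases h1 : g = g'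
  · rw [hgc, ← h1, inv_mul_cancel]
    exact Subgroup.one_mem _
  · by_cases h2 : c * g = g'
    · rw [hgc, ← h2, (Subgroup.mem_center_iff.mp hc g).symm, inv_mul_cancel_left]
      exact Subgroup.mem_zpowers c
    · exfalso
      simp only [if_neg h1, if_neg h2, add_zero, zero_add] at hcoef
      exact one_ne_zero hcoef
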